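/- Let H be a finite undirected graph on vertex set V, let s, t ∈ V be distinct vertices, and let ℓ ≥ 1 be an integer. Then λ_{H∖C}(s,t) ≥ 2(ℓ − |C|) holds for every C ⊆ V ∖ {s,t} with |C| < ℓ if and only if H contains 2ℓ pairwise edge-disjoint s–t paths such that every vertex v ∈ V ∖ {s,t} belongs to at most 2 of these paths. -/

import Mathlib

/-- `λ_H(u,v) ≥ n`: the undirected graph `H` contains `n` pairwise edge-disjoint
walks from `u` to `v`. -/
def HasFlow {V : Type*} (H : SimpleGraph V) (u v : V) (n : ℕ) : Prop :=
  ∃ f : Fin n → H.Walk u v, ∀ i j, i ≠ j → ∀ e, e ∈ (f i).edges → e ∉ (f j).edges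



set_option linter.unusedSectionVars false
open Finset

section lists
variable {α : Type*}

/-- consecutive pairs of a list -/
def pairsL (L : List α) : List (α × α) := L.zip L.tail

@[simp] lemma pairsL_nil : pairsL ([] : List α) = [] := rfl
@[simp] lemma pairsL_single (a : α) : pairsL [a] = [] := rfl
@[simp] lemma pairsL_cons₂ (a b : α) (L : List α) :
    pairsL (a :: b :: L) = (a, b) :: pairsL (b :: L) := rfl

lemma chain'_rel_of_pairs {R : α → α → Prop} :
    ∀ {L : List α}, L.Chain' R → ∀ p ∈ pairsL L, R p.1 p.2 := by
  intro L
  induction L with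
  | nil => simp
  | cons a L ih =>
    cases L with
    | nil => simp
    | cons b L' =>
      intro h p hp
      unfold List.Chain' at h
      rw [List.isChain_cons_cons] at h
      rw [pairsL_cons₂, List.mem_cons] at hp
      rcases hp with rfl | hp
      · exact h.1
      · exact ih h.2 p hp

lemma pairs_mem_snd {x y : α} {L : List α} (h : (x, y) ∈ pairsL L) : y ∈ L.tail :=
  (List.of_mem_zip h).2

lemma pairs_mem_fst {x y : α} {L : List α} (h : (x, y) ∈ pairsL L) : x ∈ L :=
  (List.of_mem_zip h).1

lemma nodup_pairs_asymm {x y : α} :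
    ∀ {L : List α}, L.Nodup → (x, y) ∈ pairsL L → (y, x) ∈ pairsL L → False := by
  intro L
  induction L with
  | nil => simp
  | cons a L ih =>
    cases L with
    | nil => simp
    | cons b L' =>
      intro hnd h1 h2
      rw [pairsL_cons₂, List.mem_cons] at h1 h2
      have hnd' := hnd.of_cons
      have ha : a ∉ b :: L' := (List.nodup_cons.mp hnd).1
      rcases h1 with h1 | h1
      · rcases h2 with h2 | h2
        · -- (x,y)=(a,b), (y,x)=(a,b) : a = b
          have hx : x = a := congrArg Prod.fst h1
          have hy : y = b := congrArg Prod.snd h1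
          have hy' : y = a := congrArg Prod.fst h2
          exact ha (by rw [← hy, hy']; exact List.mem_cons_self)
        · -- x = a appears in tail of (b::L')
          have hx : x = a := congrArg Prod.fst h1
          have : x ∈ L' := by
            have := pairs_mem_snd h2
            simpa using this
          exact ha (by rw [← hx]; exact List.mem_cons_of_mem _ this)
      · rcases h2 with h2 | h2
        · have hy : y = a := congrArg Prod.fst h2
          have : y ∈ L' := by
            have := pairs_mem_snd h1
            simpa using this
          exact ha (by rw [← hy]; exact List.mem_cons_of_mem _ this)
        · exact ih hnd' h1 h2

variable [DecidableEq α] [Fintype α]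

lemma ite_beq_comm {β : Type*} [DecidableEq β] [BEq β] [LawfulBEq β] (u v : β) :
    (if (u == v) = true then (1:ℕ) else 0) = if v = u then 1 else 0 := by
  by_cases h : v = u
  · subst h; simp
  · have h2 : ¬((u == v) = true) := by simp only [beq_iff_eq]; exact fun e => h e.symm
    simp [h2, h]

lemma sum_ite_pair (a b x : α) :
    (∑ y : α, if (x, y) = (a, b) then (1:ℕ) else 0) = if x = a then 1 else 0 := by
  by_cases hx : x = a
  · subst hx; simp [Prod.ext_iff]
  · simp [Prod.ext_iff, hx]

lemma sum_count_pairs_fst :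
    ∀ (L : List α) (x : α), (∑ y : α, (pairsL L).count (x, y)) = L.dropLast.count x := by
  intro L
  induction L with
  | nil => simp
  | cons a L ih =>
    cases L with
    | nil => simp
    | cons b L' =>
      intro x
      rw [pairsL_cons₂, show (a :: b :: L').dropLast = a :: (b :: L').dropLast from rfl]
      calc (∑ y : α, ((a, b) :: pairsL (b :: L')).count (x, y))
          = ∑ y : α, ((pairsL (b :: L')).count (x, y) + if (x, y) = (a, b) then 1 else 0) := by
            apply Finset.sum_congr rfl; intro y _; rw [List.count_cons]
            congr 1; exact ite_beq_comm (a,b) (x,y)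
        _ = (b :: L').dropLast.count x + if x = a then 1 else 0 := by
            rw [Finset.sum_add_distrib, ih, sum_ite_pair]
        _ = (a :: (b :: L').dropLast).count x := by
            rw [List.count_cons]; congr 1; exact (ite_beq_comm a x).symm

lemma sum_count_pairs_snd :
    ∀ (L : List α) (x : α), (∑ y : α, (pairsL L).count (y, x)) = L.tail.count x := by
  intro L
  induction L with
  | nil => simp
  | cons a L ih =>
    cases L with
    | nil => simp
    | cons b L' =>
      intro x
      rw [pairsL_cons₂, show (a :: b :: L').tail = b :: L' from rfl]
      have htail : (b :: L').tail.count x = L'.count x := rfl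
      calc (∑ y : α, ((a, b) :: pairsL (b :: L')).count (y, x))
          = ∑ y : α, ((pairsL (b :: L')).count (y, x) + if (y, x) = (a, b) then 1 else 0) := by
            apply Finset.sum_congr rfl; intro y _; rw [List.count_cons]
            congr 1; exact ite_beq_comm (a,b) (y,x)
        _ = L'.count x + if x = b then 1 else 0 := by
            rw [Finset.sum_add_distrib, ih, htail]
            congr 1
            by_cases hx : x = b
            · subst hx; simp [Prod.ext_iff]
            · simp [Prod.ext_iff, hx]
        _ = (b :: L').count x := by
            rw [List.count_cons]; congr 1; exact (ite_beq_comm b x).symm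

lemma not_nodup_split {L : List α} (h : ¬ L.Nodup) :
    ∃ (x : α) (l1 l2 l3 : List α), L = l1 ++ x :: (l2 ++ x :: l3) := by
  induction L with
  | nil => simp at h
  | cons a L ih =>
    by_cases ha : a ∈ L
    · obtain ⟨s, t, rfl⟩ := List.append_of_mem ha
      exact ⟨a, [], s, t, rfl⟩
    · have hnd : ¬ L.Nodup := fun hnd => h (List.nodup_cons.mpr ⟨ha, hnd⟩)
      obtain ⟨x, l1, l2, l3, rfl⟩ := ih hnd
      exact ⟨x, a :: l1, l2, l3, rfl⟩

lemma exists_nodup_chain' {R : α → α → Prop} {a b : α} (h : Relation.ReflTransGen R a b) :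
    ∃ L : List α, L.Chain' R ∧ L.head? = some a ∧ L.getLast? = some b ∧ L.Nodup := by
  obtain ⟨l, hc, hl⟩ := List.exists_isChain_cons_of_relationReflTransGen h
  suffices key : ∀ (n : ℕ) (L : List α), L.length ≤ n → L.Chain' R → L.head? = some a →
      L.getLast? = some b →
      ∃ L' : List α, L'.Chain' R ∧ L'.head? = some a ∧ L'.getLast? = some b ∧ L'.Nodup by
    refine key (a :: l).length (a :: l) le_rfl hc rfl ?_
    rw [List.getLast?_eq_getLast (List.cons_ne_nil a l), hl]
  intro n
  induction n with
  | zero =>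
    intro L hL _ hh _
    cases L with
    | nil => simp at hh
    | cons c L' => simp at hL
  | succ n ih =>
    intro L hL hc hh hlast
    by_cases hnd : L.Nodup
    · exact ⟨L, hc, hh, hlast, hnd⟩
    · obtain ⟨x, l1, l2, l3, rfl⟩ := not_nodup_split hnd
      have heq : x :: (l2 ++ x :: l3) = (x :: l2) ++ (x :: l3) := by simp
      obtain ⟨c, hcl⟩ : ∃ c, (x :: l3).getLast? = some c :=
        ⟨_, List.getLast?_eq_getLast (List.cons_ne_nil x l3)⟩
      refine ih (l1 ++ x :: l3) ?_ ?_ ?_ ?_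
      · simp only [List.length_append, List.length_cons] at hL ⊢
        omega
      · have h1 := List.isChain_split.mp hc
        have h2 := List.isChain_split.mp (show List.Chain' R ((x :: l2) ++ x :: l3) by
          rw [← heq]; exact h1.2)
        exact List.isChain_split.mpr ⟨h1.1, h2.2⟩
      · rw [List.head?_append] at hh ⊢
        simpa using hh
      · rw [List.getLast?_append] at hlast ⊢
        rw [heq, List.getLast?_append, hcl] at hlast
        rw [hcl]
        simpa using hlast

end lists

section flow
open scoped Classical

variable {α : Type*} [Fintype α] [DecidableEq α]

-- count of v in a list with known head / last
lemma count_head_tail {L : List α} (hne : L ≠ []) {a : α} (hhead : L.head? = some a) (v : α) :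
    L.count v = (if v = a then 1 else 0) + L.tail.count v := by
  have ha : L.head hne = a := by
    rw [List.head?_eq_head hne] at hhead; injection hhead
  conv_lhs => rw [← List.cons_head_tail hne]
  rw [List.count_cons, ha]
  by_cases h : v = a
  · simp [h, add_comm]
  · simp [h, Ne.symm h]

lemma count_dropLast_last {L : List α} (hne : L ≠ []) {b : α} (hlast : L.getLast? = some b)
    (v : α) : L.count v = L.dropLast.count v + (if v = b then 1 else 0) := by
  have hb : L.getLast hne = b := by
    rw [List.getLast?_eq_getLast hne] at hlast; injection hlast
  conv_lhs => rw [← List.dropLast_append_getLast hne]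
  rw [List.count_append, hb]
  by_cases h : v = b
  · simp [h]
  · simp [h, List.count_cons, Ne.symm h]

variable (c : α → α → ℕ) (a b : α)

/-- skew-symmetric integer flow -/
def IsZF (f : α → α → ℤ) : Prop :=
  (∀ x y, f x y = - f y x) ∧ (∀ x y, f x y ≤ c x y) ∧
  (∀ v, v ≠ a → v ≠ b → (∑ y, f v y) = 0)

def zval (f : α → α → ℤ) : ℤ := ∑ y, f a y

lemma sumsum_skew_zero {f : α → α → ℤ} (hf : ∀ x y, f x y = - f y x) (S : Finset α) :
    (∑ x ∈ S, ∑ y ∈ S, f x y) = 0 := by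
  have h1 : (∑ x ∈ S, ∑ y ∈ S, f x y) = ∑ x ∈ S, ∑ y ∈ S, f y x := Finset.sum_comm
  have h2 : (∑ x ∈ S, ∑ y ∈ S, f y x) = - ∑ x ∈ S, ∑ y ∈ S, f x y := by
    rw [← Finset.sum_neg_distrib]
    refine Finset.sum_congr rfl fun x _ => ?_
    rw [← Finset.sum_neg_distrib]
    exact Finset.sum_congr rfl fun y _ => hf y x
  linarith

lemma zf_cut {f : α → α → ℤ} (hf : IsZF c a b f) (S : Finset α) (ha : a ∈ S) (hb : b ∉ S) :
    zval a f = ∑ x ∈ S, ∑ y ∈ Sᶜ, f x y := by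
  have h1 : (∑ x ∈ S, ∑ y : α, f x y) = zval a f := by
    refine Finset.sum_eq_single_of_mem a ha fun x hx hxa => ?_
    exact hf.2.2 x hxa (fun h => hb (h ▸ hx))
  have h2 : (∑ x ∈ S, ∑ y : α, f x y)
      = (∑ x ∈ S, ∑ y ∈ S, f x y) + ∑ x ∈ S, ∑ y ∈ Sᶜ, f x y := by
    rw [← Finset.sum_add_distrib]
    refine Finset.sum_congr rfl fun x _ => ?_
    exact (Finset.sum_add_sum_compl S _).symm
  rw [sumsum_skew_zero hf.1 S, zero_add] at h2
  rw [← h1, h2]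

lemma augment {f : α → α → ℤ} (hab : a ≠ b) (hf : IsZF c a b f) {L : List α}
    (hch : L.Chain' (fun x y => f x y < c x y)) (hhd : L.head? = some a)
    (hls : L.getLast? = some b) (hnd : L.Nodup) :
    ∃ f', IsZF c a b f' ∧ zval a f' = zval a f + 1 := by
  classical
  set φ : α → α → ℕ := fun x y => (pairsL L).count (x, y) with hφ
  have hne : L ≠ [] := by intro h; rw [h] at hhd; simp at hhd
  have sumfst : ∀ x, (∑ y, φ x y) = L.dropLast.count x := fun x => sum_count_pairs_fst L x
  have sumsnd : ∀ x, (∑ y, φ y x) = L.tail.count x := fun x => sum_count_pairs_snd L x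
  have φle1 : ∀ x y, φ x y ≤ 1 := by
    intro x y
    have h1 : φ x y ≤ ∑ y', φ x y' :=
      Finset.single_le_sum (fun _ _ => Nat.zero_le _) (Finset.mem_univ y)
    have h2 : L.dropLast.count x ≤ 1 :=
      List.nodup_iff_count_le_one.mp (hnd.sublist (List.dropLast_sublist L)) x
    have h3 := sumfst x
    omega
  have φpos : ∀ x y, 1 ≤ φ x y → f x y < c x y := by
    intro x y h
    exact chain'_rel_of_pairs hch (x, y) (List.count_pos_iff.mp h)
  have φasymm : ∀ x y, 1 ≤ φ x y → φ y x = 0 := by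
    intro x y h
    by_contra h'
    exact nodup_pairs_asymm hnd (List.count_pos_iff.mp h)
      (List.count_pos_iff.mp (Nat.pos_of_ne_zero h'))
  have div : ∀ v, ((∑ y, (φ v y : ℤ)) - ∑ y, (φ y v : ℤ))
      = (if v = a then 1 else 0) - (if v = b then 1 else 0) := by
    intro v
    have e1 : L.count v = L.dropLast.count v + (if v = b then 1 else 0) :=
      count_dropLast_last hne hls v
    have e2 : L.count v = (if v = a then 1 else 0) + L.tail.count v :=
      count_head_tail hne hhd v
    have c1 : (∑ y, (φ v y : ℤ)) = (L.dropLast.count v : ℤ) := by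
      exact_mod_cast congrArg (fun k : ℕ => (k : ℤ)) (sumfst v)
    have c2 : (∑ y, (φ y v : ℤ)) = (L.tail.count v : ℤ) := by
      exact_mod_cast congrArg (fun k : ℕ => (k : ℤ)) (sumsnd v)
    rw [c1, c2]
    split_ifs at e1 e2 ⊢ <;> push_cast <;> omega
  refine ⟨fun x y => f x y + (φ x y : ℤ) - (φ y x : ℤ), ⟨?_, ?_, ?_⟩, ?_⟩
  · intro x y
    show f x y + (φ x y : ℤ) - (φ y x : ℤ) = -(f y x + (φ y x : ℤ) - (φ x y : ℤ))
    have := hf.1 x y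
    omega
  · intro x y
    show f x y + (φ x y : ℤ) - (φ y x : ℤ) ≤ (c x y : ℤ)
    by_cases h1 : 1 ≤ φ x y
    · have h2 := φasymm x y h1
      have h3 := φpos x y h1
      have h4 := φle1 x y
      rw [h2]
      push_cast
      omega
    · have h2 : φ x y = 0 := by omega
      have h3 := hf.2.1 x y
      rw [h2]
      push_cast
      omega
  · intro v hva hvb
    show (∑ y, (f v y + (φ v y : ℤ) - (φ y v : ℤ))) = 0
    rw [show (∑ y, (f v y + (φ v y : ℤ) - (φ y v : ℤ)))
        = (∑ y, f v y) + ((∑ y, (φ v y : ℤ)) - ∑ y, (φ y v : ℤ)) by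
      rw [Finset.sum_sub_distrib, Finset.sum_add_distrib]; ring]
    rw [hf.2.2 v hva hvb, div v]
    simp [hva, hvb]
  · show (∑ y, (f a y + (φ a y : ℤ) - (φ y a : ℤ))) = zval a f + 1
    rw [show (∑ y, (f a y + (φ a y : ℤ) - (φ y a : ℤ)))
        = (∑ y, f a y) + ((∑ y, (φ a y : ℤ)) - ∑ y, (φ y a : ℤ)) by
      rw [Finset.sum_sub_distrib, Finset.sum_add_distrib]; ring]
    rw [div a, zval]
    simp [hab]

lemma exists_zflow (hab : a ≠ b) (n : ℕ)
    (hcut : ∀ S : Finset α, a ∈ S → b ∉ S → (n : ℤ) ≤ ∑ x ∈ S, ∑ y ∈ Sᶜ, (c x y : ℤ)) :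
    ∃ f, IsZF c a b f ∧ zval a f = n := by
  suffices key : ∀ m : ℕ, m ≤ n → ∃ f, IsZF c a b f ∧ zval a f = m from key n le_rfl
  intro m
  induction m with
  | zero =>
    intro _
    exact ⟨fun _ _ => 0, ⟨fun x y => by ring, fun x y => by positivity,
      fun v _ _ => by simp⟩, by simp [zval]⟩
  | succ m ih =>
    intro hm
    obtain ⟨f, hf, hval⟩ := ih (by omega)
    set R : α → α → Prop := fun x y => f x y < c x y with hR
    set S : Finset α := Finset.univ.filter (fun x => Relation.ReflTransGen R a x) with hS
    have haS : a ∈ S := by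
      simp only [hS, Finset.mem_filter]
      exact ⟨Finset.mem_univ a, Relation.ReflTransGen.refl⟩
    by_cases hbS : b ∈ S
    · have hreach : Relation.ReflTransGen R a b := by
        simp only [hS, Finset.mem_filter] at hbS; exact hbS.2
      obtain ⟨L, hch, hhd, hls, hnd⟩ := exists_nodup_chain' hreach
      obtain ⟨f', hf', hval'⟩ := augment c a b hab hf hch hhd hls hnd
      exact ⟨f', hf', by rw [hval', hval]; push_cast; ring⟩
    · exfalso
      have heq : ∀ x ∈ S, ∀ y ∈ Sᶜ, f x y = c x y := by
        intro x hx y hy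
        have hnR : ¬ R x y := by
          intro hr
          simp only [hS, Finset.mem_filter, Finset.mem_compl] at hx hy ⊢
          exact (hy ∘ fun h => ⟨Finset.mem_univ y, h⟩) (hx.2.tail hr)
        have := hf.2.1 x y
        simp only [hR, not_lt] at hnR
        omega
      have hcuteq : zval a f = ∑ x ∈ S, ∑ y ∈ Sᶜ, (c x y : ℤ) := by
        rw [zf_cut c a b hf S haS hbS]
        exact Finset.sum_congr rfl fun x hx => Finset.sum_congr rfl fun y hy => heq x hx y hy
      have := hcut S haS hbS
      omega

end flow

section nflow
open scoped Classical

variable {α : Type*} [Fintype α] [DecidableEq α]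
variable (c : α → α → ℕ) (a b : α)

/-- nonnegative integer flow -/
def IsNF (g : α → α → ℕ) : Prop :=
  (∀ x y, g x y ≤ c x y) ∧ (∀ v, v ≠ a → v ≠ b → (∑ y, g y v) = ∑ y, g v y)

lemma exists_nflow (hab : a ≠ b) (hca : ∀ x, c x a = 0) (n : ℕ)
    (hcut : ∀ S : Finset α, a ∈ S → b ∉ S → (n : ℤ) ≤ ∑ x ∈ S, ∑ y ∈ Sᶜ, (c x y : ℤ)) :
    ∃ g, IsNF c a b g ∧ (∑ y, g a y) = n := by
  obtain ⟨f, hf, hval⟩ := exists_zflow c a b hab n hcut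
  refine ⟨fun x y => (f x y).toNat, ⟨?_, ?_⟩, ?_⟩
  · intro x y
    exact Int.toNat_le.mpr (hf.2.1 x y)
  · intro v hva hvb
    have key : ∀ x y : α, ((f x y).toNat : ℤ) - ((f y x).toNat : ℤ) = f x y := by
      intro x y
      have hs := hf.1 x y
      by_cases h : 0 ≤ f x y
      · rw [Int.toNat_of_nonneg h, show (f y x).toNat = 0 from Int.toNat_of_nonpos (by omega)]
        simp
      · rw [show (f x y).toNat = 0 from Int.toNat_of_nonpos (by omega),
          Int.toNat_of_nonneg (by omega)]
        omega
    have hz : ((∑ y, ((f v y).toNat : ℤ)) - ∑ y, ((f y v).toNat : ℤ)) = 0 := by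
      rw [← Finset.sum_sub_distrib]
      rw [show (∑ y, (((f v y).toNat : ℤ) - ((f y v).toNat : ℤ))) = ∑ y, f v y from
        Finset.sum_congr rfl fun y _ => key v y]
      exact hf.2.2 v hva hvb
    have : ((∑ y, (f y v).toNat : ℕ) : ℤ) = ((∑ y, (f v y).toNat : ℕ) : ℤ) := by
      push_cast
      omega
    exact_mod_cast this
  · have hnn : ∀ y, 0 ≤ f a y := by
      intro y
      have h1 : f y a ≤ (c y a : ℤ) := hf.2.1 y a
      rw [hca y] at h1
      have := hf.1 a y
      omega
    have : ((∑ y, (f a y).toNat : ℕ) : ℤ) = (n : ℤ) := by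
      push_cast
      rw [show (∑ y, ((f a y).toNat : ℤ)) = ∑ y, f a y from
        Finset.sum_congr rfl fun y _ => Int.toNat_of_nonneg (hnn y)]
      exact hval
    exact_mod_cast this

/-- a path in the support, recorded as a nodup list from `a` to `b` -/
structure NPath (a b : α) : Type _ where
  L : List α
  hd : L.head? = some a
  lst : L.getLast? = some b
  nd : L.Nodup

def φP (P : NPath a b) (x y : α) : ℕ := (pairsL P.L).count (x, y)

lemma φP_le_one (P : NPath a b) (x y : α) : φP a b P x y ≤ 1 := by
  have h1 : φP a b P x y ≤ ∑ y', φP a b P x y' :=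
    Finset.single_le_sum (fun _ _ => Nat.zero_le _) (Finset.mem_univ y)
  have h2 := sum_count_pairs_fst P.L x
  have h3 : P.L.dropLast.count x ≤ 1 :=
    List.nodup_iff_count_le_one.mp (P.nd.sublist (List.dropLast_sublist _)) x
  exact le_trans h1 (by rw [show (∑ y', φP a b P x y') = P.L.dropLast.count x from h2]; exact h3)

lemma NPath_ne (P : NPath a b) : P.L ≠ [] := by
  intro h
  have := P.hd
  rw [h] at this
  simp at this

lemma φP_pos_iff (P : NPath a b) (x y : α) :
    1 ≤ φP a b P x y ↔ (x, y) ∈ pairsL P.L :=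
  List.count_pos_iff

lemma exists_npath {g : α → α → ℕ} (hab : a ≠ b) (hca : ∀ x, c x a = 0)
    (hg : IsNF c a b g) (hval : 1 ≤ ∑ y, g a y) :
    ∃ P : NPath a b, ∀ x y, φP a b P x y ≤ g x y := by
  set R : α → α → Prop := fun x y => 0 < g x y with hR
  set S : Finset α := Finset.univ.filter (fun x => Relation.ReflTransGen R a x) with hS
  have haS : a ∈ S := by
    simp only [hS, Finset.mem_filter]
    exact ⟨Finset.mem_univ a, Relation.ReflTransGen.refl⟩
  have hga : ∀ x, g x a = 0 := fun x => Nat.le_zero.mp (hca x ▸ hg.1 x a)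
  have hbS : b ∈ S := by
    by_contra hbS
    have hzero : ∀ x ∈ S, ∀ y ∈ Sᶜ, g x y = 0 := by
      intro x hx y hy
      by_contra h
      have hr : R x y := Nat.pos_of_ne_zero h
      simp only [hS, Finset.mem_filter, Finset.mem_compl] at hx hy
      exact hy ⟨Finset.mem_univ y, hx.2.tail hr⟩
    -- divergence sum over S
    have key : (∑ x ∈ S, (((∑ y, (g x y : ℤ)) - ∑ y, (g y x : ℤ)))) = ∑ y, (g a y : ℤ) := by
      rw [Finset.sum_eq_single_of_mem a haS]
      · rw [show (∑ y, (g y a : ℤ)) = 0 by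
          refine Finset.sum_eq_zero fun y _ => by rw [hga y]; simp]
        ring
      · intro x hx hxa
        have hxb : x ≠ b := fun h => hbS (h ▸ hx)
        have := hg.2 x hxa hxb
        have : ((∑ y, g y x : ℕ) : ℤ) = ((∑ y, g x y : ℕ) : ℤ) := by exact_mod_cast this
        push_cast at this
        omega
    have split : ∀ x : α, (∑ y, (g x y : ℤ)) = (∑ y ∈ S, (g x y : ℤ)) + ∑ y ∈ Sᶜ, (g x y : ℤ) :=
      fun x => (Finset.sum_add_sum_compl S _).symm
    have split2 : ∀ x : α, (∑ y, (g y x : ℤ)) = (∑ y ∈ S, (g y x : ℤ)) + ∑ y ∈ Sᶜ, (g y x : ℤ) :=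
      fun x => (Finset.sum_add_sum_compl S _).symm
    have key2 : (∑ x ∈ S, (((∑ y, (g x y : ℤ)) - ∑ y, (g y x : ℤ))))
        = (∑ x ∈ S, ∑ y ∈ Sᶜ, (g x y : ℤ)) - ∑ x ∈ S, ∑ y ∈ Sᶜ, (g y x : ℤ) := by
      have hcancel : (∑ x ∈ S, ∑ y ∈ S, ((g x y : ℤ) - (g y x : ℤ))) = 0 := by
        apply sumsum_skew_zero (f := fun x y => (g x y : ℤ) - (g y x : ℤ))
        intro x y
        ring
      calc (∑ x ∈ S, (((∑ y, (g x y : ℤ)) - ∑ y, (g y x : ℤ))))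
          = (∑ x ∈ S, ∑ y ∈ S, ((g x y : ℤ) - (g y x : ℤ)))
            + ((∑ x ∈ S, ∑ y ∈ Sᶜ, (g x y : ℤ)) - ∑ x ∈ S, ∑ y ∈ Sᶜ, (g y x : ℤ)) := by
            rw [show ((∑ x ∈ S, ∑ y ∈ Sᶜ, (g x y : ℤ)) - ∑ x ∈ S, ∑ y ∈ Sᶜ, (g y x : ℤ))
                = ∑ x ∈ S, ((∑ y ∈ Sᶜ, (g x y : ℤ)) - ∑ y ∈ Sᶜ, (g y x : ℤ)) from
              (Finset.sum_sub_distrib _ _).symm, ← Finset.sum_add_distrib]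
            refine Finset.sum_congr rfl fun x _ => ?_
            rw [split x, split2 x, Finset.sum_sub_distrib]
            ring
        _ = _ := by rw [hcancel]; ring
    have hzs : (∑ x ∈ S, ∑ y ∈ Sᶜ, (g x y : ℤ)) = 0 :=
      Finset.sum_eq_zero fun x hx => Finset.sum_eq_zero fun y hy => by rw [hzero x hx y hy]; simp
    have hnn : 0 ≤ ∑ x ∈ S, ∑ y ∈ Sᶜ, (g y x : ℤ) :=
      Finset.sum_nonneg fun x _ => Finset.sum_nonneg fun y _ => by positivity
    have hpos : (1 : ℤ) ≤ ∑ y, (g a y : ℤ) := by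
      have : ((1 : ℕ) : ℤ) ≤ ((∑ y, g a y : ℕ) : ℤ) := by exact_mod_cast hval
      push_cast at this
      omega
    omega
  have hreach : Relation.ReflTransGen R a b := by
    simp only [hS, Finset.mem_filter] at hbS
    exact hbS.2
  obtain ⟨L, hch, hhd, hls, hnd⟩ := exists_nodup_chain' hreach
  refine ⟨⟨L, hhd, hls, hnd⟩, fun x y => ?_⟩
  by_cases h : 1 ≤ (pairsL L).count (x, y)
  · have hr : R x y := chain'_rel_of_pairs hch (x, y) (List.count_pos_iff.mp h)
    have hle : (pairsL L).count (x, y) ≤ 1 := φP_le_one a b ⟨L, hhd, hls, hnd⟩ x y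
    have : 0 < g x y := hr
    show (pairsL L).count (x, y) ≤ g x y
    omega
  · show (pairsL L).count (x, y) ≤ g x y
    omega

end nflow

section decomp
variable {α : Type*} [Fintype α] [DecidableEq α]
variable (c : α → α → ℕ) (a b : α)

lemma npath_head_mem (P : NPath a b) : P.L.count a = 1 := by
  obtain ⟨L, hd, lst, nd⟩ := P
  cases L with
  | nil => simp at hd
  | cons x T =>
    have hx : x = a := by injection hd
    subst hx
    have h1 : 0 < (x :: T).count x := List.count_pos_iff.mpr (List.mem_cons_self)
    have h2 := List.nodup_iff_count_le_one.mp nd x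
    exact le_antisymm h2 h1

lemma decomp_step {g : α → α → ℕ} (hab : a ≠ b) (hg : IsNF c a b g)
    (P : NPath a b) (hφ : ∀ x y, φP a b P x y ≤ g x y) :
    IsNF c a b (fun x y => g x y - φP a b P x y) ∧
      (∑ y, (g a y - φP a b P a y)) + 1 = ∑ y, g a y := by
  have hne := NPath_ne a b P
  have sumfst : ∀ x, (∑ y, φP a b P x y) = P.L.dropLast.count x :=
    fun x => sum_count_pairs_fst P.L x
  have sumsnd : ∀ x, (∑ y, φP a b P y x) = P.L.tail.count x :=
    fun x => sum_count_pairs_snd P.L x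
  have e1 : ∀ v, P.L.count v = P.L.dropLast.count v + (if v = b then 1 else 0) :=
    fun v => count_dropLast_last hne P.lst v
  have e2 : ∀ v, P.L.count v = (if v = a then 1 else 0) + P.L.tail.count v :=
    fun v => count_head_tail hne P.hd v
  have sub_out : ∀ v, (∑ y, (g v y - φP a b P v y)) + ∑ y, φP a b P v y = ∑ y, g v y := by
    intro v
    rw [← Finset.sum_add_distrib]
    exact Finset.sum_congr rfl fun y _ => Nat.sub_add_cancel (hφ v y)
  have sub_in : ∀ v, (∑ y, (g y v - φP a b P y v)) + ∑ y, φP a b P y v = ∑ y, g y v := by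
    intro v
    rw [← Finset.sum_add_distrib]
    exact Finset.sum_congr rfl fun y _ => Nat.sub_add_cancel (hφ y v)
  refine ⟨⟨fun x y => le_trans (Nat.sub_le _ _) (hg.1 x y), fun v hva hvb => ?_⟩, ?_⟩
  · show (∑ y, (g y v - φP a b P y v)) = ∑ y, (g v y - φP a b P v y)
    have h1 := sub_out v
    have h2 := sub_in v
    have h3 := hg.2 v hva hvb
    have h4 : P.L.tail.count v = P.L.dropLast.count v := by
      have := e1 v
      have := e2 v
      simp only [if_neg hva, if_neg hvb] at *
      omega
    have h5 := sumfst v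
    have h6 := sumsnd v
    omega
  · have h1 := sub_out a
    have h2 : (∑ y, φP a b P a y) = 1 := by
      rw [sumfst a]
      have ha := e1 a
      have hc := npath_head_mem a b P
      rw [if_neg hab] at ha
      omega
    omega

lemma decomp (hab : a ≠ b) (hca : ∀ x, c x a = 0) :
    ∀ (n : ℕ) (g : α → α → ℕ), IsNF c a b g → (∑ y, g a y) = n →
      ∃ P : Fin n → NPath a b, ∀ x y, (∑ i, φP a b (P i) x y) ≤ g x y := by
  intro n
  induction n with
  | zero => exact fun g _ _ => ⟨Fin.elim0, fun x y => by simp⟩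
  | succ n ih =>
    intro g hg hval
    obtain ⟨P0, hP0⟩ := exists_npath c a b hab hca hg (by omega)
    obtain ⟨hg', hval'⟩ := decomp_step c a b hab hg P0 hP0
    obtain ⟨P', hP'⟩ := ih _ hg' (by omega)
    refine ⟨Fin.cons P0 P', fun x y => ?_⟩
    rw [Fin.sum_univ_succ]
    simp only [Fin.cons_zero, Fin.cons_succ]
    have h1 := hP' x y
    have h2 := hP0 x y
    omega

end decomp

section network
open scoped Classical

lemma sum_ite_pair_snd {α : Type*} [DecidableEq α] [Fintype α] (p q x : α) :
    (∑ y : α, if (y, x) = (p, q) then (1:ℕ) else 0) = if x = q then 1 else 0 := by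
  by_cases hx : x = q
  · subst hx; simp [Prod.ext_iff]
  · simp [Prod.ext_iff, hx]

variable {V : Type*} [Fintype V] [DecidableEq V] (H : SimpleGraph V) (s t : V)

/-- the capacity function of the auxiliary network: `Sum.inl v` is the in-copy,
`Sum.inr v` the out-copy of `v`. -/
noncomputable def cap : V ⊕ V → V ⊕ V → ℕ
  | Sum.inr u, Sum.inl v => if H.Adj u v then 1 else 0
  | Sum.inl v, Sum.inr w => if v = w ∧ v ≠ s ∧ v ≠ t then 2 else 0
  | _, _ => 0

lemma cap_rr (u w : V) : cap H s t (Sum.inr u) (Sum.inr w) = 0 := rfl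
lemma cap_ll (u w : V) : cap H s t (Sum.inl u) (Sum.inl w) = 0 := rfl
lemma cap_rl (u v : V) : cap H s t (Sum.inr u) (Sum.inl v) = if H.Adj u v then 1 else 0 := rfl
lemma cap_lr (v w : V) :
    cap H s t (Sum.inl v) (Sum.inr w) = if v = w ∧ v ≠ s ∧ v ≠ t then 2 else 0 := rfl

lemma cap_src (x : V ⊕ V) : cap H s t x (Sum.inr s) = 0 := by
  rcases x with v | v
  · rw [cap_lr]
    apply if_neg
    rintro ⟨h1, h2, _⟩
    exact h2 h1
  · rfl

lemma cap_snk (y : V ⊕ V) : cap H s t (Sum.inl t) y = 0 := by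
  rcases y with v | v
  · rfl
  · rw [cap_lr]
    apply if_neg
    rintro ⟨h1, _, h3⟩
    exact h3 rfl

variable {g : V ⊕ V → V ⊕ V → ℕ} (hst : s ≠ t)
  (hg : IsNF (cap H s t) (Sum.inr s) (Sum.inl t) g)

include hg in
lemma g_rr (u w : V) : g (Sum.inr u) (Sum.inr w) = 0 :=
  Nat.le_zero.mp (cap_rr H s t u w ▸ hg.1 _ _)

include hg in
lemma g_ll (u w : V) : g (Sum.inl u) (Sum.inl w) = 0 :=
  Nat.le_zero.mp (cap_ll H s t u w ▸ hg.1 _ _)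

include hg in
lemma g_adj {u v : V} (h : 0 < g (Sum.inr u) (Sum.inl v)) : H.Adj u v := by
  have := hg.1 (Sum.inr u) (Sum.inl v)
  rw [cap_rl] at this
  by_contra hA
  rw [if_neg hA] at this
  omega

include hg in
lemma g_lr {v w : V} (h : 0 < g (Sum.inl v) (Sum.inr w)) : v = w ∧ v ≠ s ∧ v ≠ t := by
  have := hg.1 (Sum.inl v) (Sum.inr w)
  rw [cap_lr] at this
  by_contra hA
  rw [if_neg hA] at this
  omega

include hst hg in
lemma g_into_inl_s (x : V ⊕ V) : g x (Sum.inl s) = 0 := by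
  have hcons := hg.2 (Sum.inl s) (by simp) (by simp [hst])
  have hout : (∑ y, g (Sum.inl s) y) = 0 := by
    refine Finset.sum_eq_zero fun y _ => ?_
    rcases y with w | w
    · exact g_ll H s t hg s w
    · have := hg.1 (Sum.inl s) (Sum.inr w)
      rw [cap_lr] at this
      rw [if_neg (by rintro ⟨h1, h2, _⟩; exact h2 rfl)] at this
      omega
  rw [hout] at hcons
  exact (Finset.sum_eq_zero_iff.mp hcons) x (Finset.mem_univ x)

include hst hg in
lemma g_out_inr_t (y : V ⊕ V) : g (Sum.inr t) y = 0 := by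
  have hcons := hg.2 (Sum.inr t) (by simp [Ne.symm hst]) (by simp)
  have hin : (∑ y, g y (Sum.inr t)) = 0 := by
    refine Finset.sum_eq_zero fun x _ => ?_
    rcases x with w | w
    · have := hg.1 (Sum.inl w) (Sum.inr t)
      rw [cap_lr] at this
      rw [if_neg (by rintro ⟨h1, _, h3⟩; exact h3 h1)] at this
      omega
    · exact g_rr H s t hg w t
  rw [hcons] at hin
  exact (Finset.sum_eq_zero_iff.mp hin) y (Finset.mem_univ y)

end network

section network2
open scoped Classical

variable {V : Type*} [Fintype V] [DecidableEq V] (H : SimpleGraph V) (s t : V)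

lemma exists_norm_flow (hst : s ≠ t) (n : ℕ)
    (hcut : ∀ S : Finset (V ⊕ V), Sum.inr s ∈ S → Sum.inl t ∉ S →
      (n : ℤ) ≤ ∑ x ∈ S, ∑ y ∈ Sᶜ, (cap H s t x y : ℤ)) :
    ∃ g, IsNF (cap H s t) (Sum.inr s) (Sum.inl t) g ∧ (∑ y, g (Sum.inr s) y) = n ∧
      ∀ u v : V, g (Sum.inr u) (Sum.inl v) = 0 ∨ g (Sum.inr v) (Sum.inl u) = 0 := by
  have hQ : ∃ N : ℕ, ∃ g, IsNF (cap H s t) (Sum.inr s) (Sum.inl t) g ∧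
      (∑ y, g (Sum.inr s) y) = n ∧ (∑ x, ∑ y, g x y) = N := by
    obtain ⟨g, hg, hval⟩ := exists_nflow (cap H s t) (Sum.inr s) (Sum.inl t)
      (by simp) (cap_src H s t) n hcut
    exact ⟨_, g, hg, hval, rfl⟩
  obtain ⟨g, hg, hval, hsum⟩ := Nat.find_spec hQ
  refine ⟨g, hg, hval, fun u v => ?_⟩
  by_contra hcon
  push_neg at hcon
  have h1 : 0 < g (Sum.inr u) (Sum.inl v) := Nat.pos_of_ne_zero hcon.1
  have h2 : 0 < g (Sum.inr v) (Sum.inl u) := Nat.pos_of_ne_zero hcon.2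
  have hAdj : H.Adj u v := g_adj H s t hg h1
  have huv : u ≠ v := hAdj.ne
  have hvs : v ≠ s := fun h => by
    rw [h] at h1; rw [g_into_inl_s H s t hst hg] at h1; omega
  have hus : u ≠ s := fun h => by
    rw [h] at h2; rw [g_into_inl_s H s t hst hg] at h2; omega
  have hut : u ≠ t := fun h => by
    rw [h] at h1; rw [g_out_inr_t H s t hst hg] at h1; omega
  have hvt : v ≠ t := fun h => by
    rw [h] at h2; rw [g_out_inr_t H s t hst hg] at h2; omega
  -- positive flow on the vertex arcs of u and v
  have vert : ∀ w w' : V, w ≠ s → w ≠ t → 0 < g (Sum.inr w') (Sum.inl w) →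
      0 < g (Sum.inl w) (Sum.inr w) := by
    intro w w' hws hwt hpos
    have hcons := hg.2 (Sum.inl w) (by simp) (by simp [hwt])
    have hout : (∑ y, g (Sum.inl w) y) = g (Sum.inl w) (Sum.inr w) := by
      refine Finset.sum_eq_single_of_mem _ (Finset.mem_univ _) fun y _ hy => ?_
      rcases y with w'' | w''
      · exact g_ll H s t hg w w''
      · by_contra hz
        obtain ⟨he, _, _⟩ := g_lr H s t hg (Nat.pos_of_ne_zero hz)
        exact hy (by rw [he])
    have hin : g (Sum.inr w') (Sum.inl w) ≤ ∑ y, g y (Sum.inl w) :=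
      Finset.single_le_sum (f := fun y => g y (Sum.inl w)) (fun _ _ => Nat.zero_le _)
        (Finset.mem_univ _)
    omega
  have hv2 : 0 < g (Sum.inl v) (Sum.inr v) := vert v u hvs hvt h1
  have hu2 : 0 < g (Sum.inl u) (Sum.inr u) := vert u v hus hut h2
  -- the cancelling 4-cycle
  set χ : V ⊕ V → V ⊕ V → ℕ := fun x y =>
    (if (x, y) = (Sum.inr u, Sum.inl v) then 1 else 0) +
    (if (x, y) = (Sum.inl v, Sum.inr v) then 1 else 0) +
    (if (x, y) = (Sum.inr v, Sum.inl u) then 1 else 0) +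
    (if (x, y) = (Sum.inl u, Sum.inr u) then 1 else 0) with hχ
  have hχle : ∀ x y, χ x y ≤ g x y := by
    intro x y
    simp only [hχ]
    by_cases e1 : (x, y) = (Sum.inr u, Sum.inl v)
    · rw [Prod.ext_iff] at e1
      obtain ⟨hx, hy⟩ := e1
      subst hx; subst hy
      simp only [Prod.ext_iff]
      simp [huv, Ne.symm huv]
      omega
    · by_cases e2 : (x, y) = (Sum.inl v, Sum.inr v)
      · rw [Prod.ext_iff] at e2
        obtain ⟨hx, hy⟩ := e2
        subst hx; subst hy
        simp only [Prod.ext_iff]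
        simp [huv, Ne.symm huv]
        omega
      · by_cases e3 : (x, y) = (Sum.inr v, Sum.inl u)
        · rw [Prod.ext_iff] at e3
          obtain ⟨hx, hy⟩ := e3
          subst hx; subst hy
          simp only [Prod.ext_iff]
          simp [huv, Ne.symm huv]
          omega
        · by_cases e4 : (x, y) = (Sum.inl u, Sum.inr u)
          · rw [Prod.ext_iff] at e4
            obtain ⟨hx, hy⟩ := e4
            subst hx; subst hy
            simp only [Prod.ext_iff]
            simp [huv, Ne.symm huv]
            omega
          · rw [if_neg e1, if_neg e2, if_neg e3, if_neg e4]
            omega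
  have χout : ∀ w, (∑ y, χ w y) =
      (if w = Sum.inr u then 1 else 0) + (if w = Sum.inl v then 1 else 0) +
      (if w = Sum.inr v then 1 else 0) + (if w = Sum.inl u then 1 else 0) := by
    intro w
    simp only [hχ]
    rw [Finset.sum_add_distrib, Finset.sum_add_distrib, Finset.sum_add_distrib,
      sum_ite_pair (Sum.inr u) (Sum.inl v) w, sum_ite_pair (Sum.inl v) (Sum.inr v) w,
      sum_ite_pair (Sum.inr v) (Sum.inl u) w, sum_ite_pair (Sum.inl u) (Sum.inr u) w]
  have χin : ∀ w, (∑ y, χ y w) =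
      (if w = Sum.inl v then 1 else 0) + (if w = Sum.inr v then 1 else 0) +
      (if w = Sum.inl u then 1 else 0) + (if w = Sum.inr u then 1 else 0) := by
    intro w
    simp only [hχ]
    rw [Finset.sum_add_distrib, Finset.sum_add_distrib, Finset.sum_add_distrib,
      sum_ite_pair_snd (Sum.inr u) (Sum.inl v) w, sum_ite_pair_snd (Sum.inl v) (Sum.inr v) w,
      sum_ite_pair_snd (Sum.inr v) (Sum.inl u) w, sum_ite_pair_snd (Sum.inl u) (Sum.inr u) w]
  set g' : V ⊕ V → V ⊕ V → ℕ := fun x y => g x y - χ x y with hg'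
  have sub_out : ∀ w, (∑ y, g' w y) + ∑ y, χ w y = ∑ y, g w y := by
    intro w
    rw [← Finset.sum_add_distrib]
    exact Finset.sum_congr rfl fun y _ => Nat.sub_add_cancel (hχle w y)
  have sub_in : ∀ w, (∑ y, g' y w) + ∑ y, χ y w = ∑ y, g y w := by
    intro w
    rw [← Finset.sum_add_distrib]
    exact Finset.sum_congr rfl fun y _ => Nat.sub_add_cancel (hχle y w)
  have hg'NF : IsNF (cap H s t) (Sum.inr s) (Sum.inl t) g' := by
    constructor
    · intro x y
      exact le_trans (Nat.sub_le _ _) (hg.1 x y)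
    · intro w hws hwt
      have h1 := sub_out w
      have h2 := sub_in w
      have h3 := hg.2 w hws hwt
      have h4 : (∑ y, χ w y) = ∑ y, χ y w := by
        rw [χout w, χin w]; ring
      omega
  have hval' : (∑ y, g' (Sum.inr s) y) = n := by
    have h1 := sub_out (Sum.inr s)
    have h2 : (∑ y, χ (Sum.inr s) y) = 0 := by
      rw [χout]
      rw [if_neg (by simp [Ne.symm hus]), if_neg (by simp), if_neg (by simp [Ne.symm hvs]),
        if_neg (by simp)]
    omega
  have hsum' : (∑ x, ∑ y, g' x y) + 4 = ∑ x, ∑ y, g x y := by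
    have hχsum : (∑ x, ∑ y, χ x y) = 4 := by
      rw [show (∑ x, ∑ y, χ x y) = ∑ x, ((if x = Sum.inr u then 1 else 0) +
          (if x = Sum.inl v then 1 else 0) + (if x = Sum.inr v then 1 else 0) +
          (if x = Sum.inl u then (1:ℕ) else 0)) from Finset.sum_congr rfl fun x _ => χout x]
      rw [Finset.sum_add_distrib, Finset.sum_add_distrib, Finset.sum_add_distrib]
      simp [Finset.sum_ite_eq]
    rw [← hχsum, ← Finset.sum_add_distrib]
    exact Finset.sum_congr rfl fun x _ => sub_out x
  have hless : (∑ x, ∑ y, g' x y) < Nat.find hQ := by omega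
  exact Nat.find_min hQ hless ⟨g', hg'NF, hval', rfl⟩

lemma chain'_of_pairs {β : Type*} {R : β → β → Prop} :
    ∀ {L : List β}, (∀ p ∈ pairsL L, R p.1 p.2) → L.Chain' R := by
  intro L
  induction L with
  | nil => intro _; exact List.isChain_nil
  | cons a L ih =>
    cases L with
    | nil => intro _; exact List.isChain_singleton a
    | cons b L' =>
      intro h
      unfold List.Chain'
      rw [List.isChain_cons_cons]
      refine ⟨h (a, b) (by rw [pairsL_cons₂]; exact List.mem_cons_self), ih fun p hp => ?_⟩
      exact h p (by rw [pairsL_cons₂]; exact List.mem_cons_of_mem _ hp)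

lemma pair_of_mem_tail {β : Type*} {y : β} :
    ∀ {L : List β}, y ∈ L.tail → ∃ x, (x, y) ∈ pairsL L := by
  intro L
  induction L with
  | nil => simp
  | cons a L ih =>
    intro hy
    rw [show (a :: L).tail = L from rfl] at hy
    cases L with
    | nil => simp at hy
    | cons b L' =>
      rcases List.mem_cons.mp hy with rfl | hy'
      · exact ⟨a, by rw [pairsL_cons₂]; exact List.mem_cons_self⟩
      · obtain ⟨x, hx⟩ := ih (by simpa using hy')
        exact ⟨x, by rw [pairsL_cons₂]; exact List.mem_cons_of_mem _ hx⟩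

variable {g : V ⊕ V → V ⊕ V → ℕ}

lemma npath_to_walk_aux (hst : s ≠ t)
    (hg : IsNF (cap H s t) (Sum.inr s) (Sum.inl t) g) :
    ∀ (N : ℕ) (u : V) (L : List (V ⊕ V)), L.length ≤ N →
    List.Chain (fun x y => 0 < g x y) (Sum.inr u) L → L.getLast? = some (Sum.inl t) →
    (Sum.inr u :: L).Nodup → Sum.inl u ∉ L →
    ∃ w : H.Walk u t, w.IsPath ∧
      (∀ x y : V, s(x, y) ∈ w.edges →
        (Sum.inr x, Sum.inl y) ∈ pairsL (Sum.inr u :: L) ∨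
        (Sum.inr y, Sum.inl x) ∈ pairsL (Sum.inr u :: L)) ∧
      (∀ v : V, v ∈ w.support → v ≠ u → v ≠ t →
        (Sum.inl v, Sum.inr v) ∈ pairsL (Sum.inr u :: L)) ∧
      (∀ v : V, v ∈ w.support → v = u ∨ Sum.inl v ∈ L) := by
  intro N
  induction N with
  | zero =>
    intro u L hlen _ hlast _ _
    have : L = [] := List.length_eq_zero_iff.mp (Nat.le_zero.mp hlen)
    subst this
    simp at hlast
  | succ N ih =>
    intro u L hlen hch hlast hnd hnotin
    cases L with
    | nil => simp at hlast
    | cons z L2 =>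
      unfold List.Chain at hch
      rw [List.isChain_cons_cons] at hch
      obtain ⟨hR1, hch2⟩ := hch
      obtain ⟨v, rfl⟩ : ∃ v, z = Sum.inl v := by
        rcases z with v | v
        · exact ⟨v, rfl⟩
        · rw [g_rr H s t hg] at hR1; omega
      have hAdj : H.Adj u v := g_adj H s t hg hR1
      cases L2 with
      | nil =>
        have hvt : v = t := by
          rw [List.getLast?_singleton] at hlast
          exact Sum.inl.inj (Option.some.inj hlast)
        have hvt' : t = v := hvt.symm
        subst hvt'
        have hut : u ≠ t := by
          intro h
          exact hnotin (by rw [h]; exact List.mem_singleton_self _)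
        refine ⟨SimpleGraph.Walk.cons hAdj SimpleGraph.Walk.nil, ?_, ?_, ?_, ?_⟩
        · rw [SimpleGraph.Walk.cons_isPath_iff]
          exact ⟨SimpleGraph.Walk.IsPath.nil, by simp [hut]⟩
        · intro x y he
          simp only [SimpleGraph.Walk.edges_cons, SimpleGraph.Walk.edges_nil,
            List.mem_singleton] at he
          rw [Sym2.eq_iff] at he
          rcases he with ⟨rfl, rfl⟩ | ⟨rfl, rfl⟩
          · left; rw [pairsL_cons₂]; exact List.mem_cons_self
          · right; rw [pairsL_cons₂]; exact List.mem_cons_self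
        · intro v' hv' hvu hvt
          simp only [SimpleGraph.Walk.support_cons, SimpleGraph.Walk.support_nil,
            List.mem_cons, List.not_mem_nil, or_false] at hv'
          rcases hv' with rfl | rfl
          · exact absurd rfl hvu
          · exact absurd rfl hvt
        · intro v' hv'
          simp only [SimpleGraph.Walk.support_cons, SimpleGraph.Walk.support_nil,
            List.mem_cons, List.not_mem_nil, or_false] at hv'
          rcases hv' with rfl | rfl
          · exact Or.inl rfl
          · exact Or.inr (List.mem_singleton_self _)
      | cons z2 L3 =>
        rw [List.isChain_cons_cons] at hch2
        obtain ⟨hR2, hch3⟩ := hch2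
        obtain rfl : z2 = Sum.inr v := by
          rcases z2 with w | w
          · rw [g_ll H s t hg] at hR2; omega
          · obtain ⟨rfl, _, _⟩ := g_lr H s t hg hR2
            rfl
        have hL3ne : L3 ≠ [] := by
          intro h
          subst h
          simp only [List.getLast?_cons_cons, List.getLast?_singleton] at hlast
          exact absurd hlast (by simp)
        have hlast3 : L3.getLast? = some (Sum.inl t) := by
          rw [List.getLast?_cons_cons] at hlast
          cases L3 with
          | nil => exact absurd rfl hL3ne
          | cons z3 L4 => rw [List.getLast?_cons_cons] at hlast; exact hlast
        have hnd3 : (Sum.inr v :: L3).Nodup := by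
          have hsub : (Sum.inr v :: L3).Sublist
              (Sum.inr u :: Sum.inl v :: Sum.inr v :: L3) := by
            refine List.Sublist.cons _ (List.Sublist.cons _ ?_)
            exact List.Sublist.refl _
          exact hsub.nodup hnd
        have hnotin3 : Sum.inl v ∉ L3 := by
          have h2 := hnd.of_cons
          rw [List.nodup_cons] at h2
          intro h
          exact h2.1 (List.mem_cons_of_mem _ h)
        have hch3' : List.Chain (fun x y => 0 < g x y) (Sum.inr v) L3 := hch3
        obtain ⟨w', hwp, hwe, hws, hwm⟩ := ih v L3
          (by simp only [List.length_cons] at hlen ⊢; omega) hch3' hlast3 hnd3 hnotin3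
        have hpairs : pairsL (Sum.inr u :: Sum.inl v :: Sum.inr v :: L3)
            = (Sum.inr u, Sum.inl v) :: (Sum.inl v, Sum.inr v)
              :: pairsL (Sum.inr v :: L3) := by
          rw [pairsL_cons₂, pairsL_cons₂]
        have hmemlift : ∀ p : (V ⊕ V) × (V ⊕ V), p ∈ pairsL (Sum.inr v :: L3) →
            p ∈ pairsL (Sum.inr u :: Sum.inl v :: Sum.inr v :: L3) := by
          intro p hp
          rw [hpairs]
          exact List.mem_cons_of_mem _ (List.mem_cons_of_mem _ hp)
        have hunotin : u ∉ w'.support := by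
          intro hu
          rcases hwm u hu with rfl | hmem
          · exact hnotin (List.mem_cons_self)
          · exact hnotin (List.mem_cons_of_mem _ (List.mem_cons_of_mem _ hmem))
        refine ⟨SimpleGraph.Walk.cons hAdj w', ?_, ?_, ?_, ?_⟩
        · rw [SimpleGraph.Walk.cons_isPath_iff]
          exact ⟨hwp, hunotin⟩
        · intro x y he
          simp only [SimpleGraph.Walk.edges_cons, List.mem_cons] at he
          rcases he with he | he
          · rw [Sym2.eq_iff] at he
            rcases he with ⟨rfl, rfl⟩ | ⟨rfl, rfl⟩
            · left; rw [hpairs]; exact List.mem_cons_self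
            · right; rw [hpairs]; exact List.mem_cons_self
          · rcases hwe x y he with h | h
            · exact Or.inl (hmemlift _ h)
            · exact Or.inr (hmemlift _ h)
        · intro v' hv' hvu hvt
          simp only [SimpleGraph.Walk.support_cons, List.mem_cons] at hv'
          rcases hv' with rfl | hv'
          · exact absurd rfl hvu
          · by_cases hvv : v' = v
            · subst hvv
              rw [hpairs]
              exact List.mem_cons_of_mem _ (List.mem_cons_self)
            · exact hmemlift _ (hws v' hv' hvv hvt)
        · intro v' hv'
          simp only [SimpleGraph.Walk.support_cons, List.mem_cons] at hv'
          rcases hv' with rfl | hv'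
          · exact Or.inl rfl
          · rcases hwm v' hv' with rfl | hmem
            · exact Or.inr (List.mem_cons_self)
            · exact Or.inr (List.mem_cons_of_mem _ (List.mem_cons_of_mem _ hmem))

lemma npath_to_walk (hst : s ≠ t)
    (hg : IsNF (cap H s t) (Sum.inr s) (Sum.inl t) g)
    (P : NPath (Sum.inr s) (Sum.inl t))
    (hpos : ∀ p ∈ pairsL P.L, 0 < g p.1 p.2) :
    ∃ w : H.Walk s t, w.IsPath ∧
      (∀ x y : V, s(x, y) ∈ w.edges →
        (Sum.inr x, Sum.inl y) ∈ pairsL P.L ∨ (Sum.inr y, Sum.inl x) ∈ pairsL P.L) ∧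
      (∀ v : V, v ∈ w.support → v ≠ s → v ≠ t → (Sum.inl v, Sum.inr v) ∈ pairsL P.L) := by
  obtain ⟨L, hd, lst, nd⟩ := P
  dsimp only at hpos ⊢
  cases L with
  | nil => simp at hd
  | cons z L' =>
    obtain rfl : z = Sum.inr s := by injection hd
    have hch' : List.Chain' (fun x y => 0 < g x y) (Sum.inr s :: L') := chain'_of_pairs hpos
    have hch : List.Chain (fun x y => 0 < g x y) (Sum.inr s) L' := hch'
    have hlast : L'.getLast? = some (Sum.inl t) := by
      cases L' with
      | nil =>
        rw [List.getLast?_singleton] at lst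
        exact absurd lst (by simp)
      | cons z2 L2 => rw [List.getLast?_cons_cons] at lst; exact lst
    have hnotin : Sum.inl s ∉ L' := by
      intro hmem
      obtain ⟨x, hx⟩ := pair_of_mem_tail (show Sum.inl s ∈ (Sum.inr s :: L').tail from hmem)
      have := hpos _ hx
      rw [g_into_inl_s H s t hst hg] at this
      omega
    obtain ⟨w, hwp, hwe, hws, _⟩ := npath_to_walk_aux H s t hst hg L'.length s L' le_rfl
      hch hlast nd hnotin
    exact ⟨w, hwp, hwe, hws⟩


lemma cross {G : SimpleGraph V} (S : Finset (V ⊕ V)) (hsrcS : Sum.inr s ∈ S)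
    (hAdjS : ∀ u x : V, G.Adj u x → x ≠ s → Sum.inl x ∈ S → Sum.inr x ∈ S) :
    ∀ (u v : V) (w : G.Walk u v), Sum.inr u ∈ S → Sum.inl v ∉ S → u ≠ v →
      ∃ x y : V, s(x, y) ∈ w.edges ∧ Sum.inr x ∈ S ∧ Sum.inl y ∉ S := by
  intro u v w
  induction w with
  | nil => intro _ _ hne; exact absurd rfl hne
  | @cons u' x' v' hadj p ih =>
    intro huS hvS _
    by_cases hx : Sum.inl x' ∈ S
    · have hxv : x' ≠ v' := fun h => hvS (h ▸ hx)
      have hxS : Sum.inr x' ∈ S := by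
        by_cases hxs : x' = s
        · exact hxs ▸ hsrcS
        · exact hAdjS u' x' hadj hxs hx
      obtain ⟨x, y, he, h1, h2⟩ := ih hxS hvS hxv
      exact ⟨x, y, by rw [SimpleGraph.Walk.edges_cons]; exact List.mem_cons_of_mem _ he, h1, h2⟩
    · exact ⟨u', x', by rw [SimpleGraph.Walk.edges_cons]; exact List.mem_cons_self, huS, hx⟩

lemma cut_bound (hst : s ≠ t) (ℓ : ℕ) (hℓ : 1 ≤ ℓ)
    (hyp : ∀ C : Finset V, s ∉ C → t ∉ C → C.card < ℓ →
      HasFlow (SimpleGraph.fromRel fun a b => H.Adj a b ∧ a ∉ C ∧ b ∉ C) s t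
        (2 * (ℓ - C.card)))
    (S : Finset (V ⊕ V)) (hsrcS : Sum.inr s ∈ S) (hsnkS : Sum.inl t ∉ S) :
    ((2 * ℓ : ℕ) : ℤ) ≤ ∑ x ∈ S, ∑ y ∈ Sᶜ, (cap H s t x y : ℤ) := by
  classical
  suffices hN : 2 * ℓ ≤ ∑ x ∈ S, ∑ y ∈ Sᶜ, cap H s t x y by
    have : ((2 * ℓ : ℕ) : ℤ) ≤ ((∑ x ∈ S, ∑ y ∈ Sᶜ, cap H s t x y : ℕ) : ℤ) := by
      exact_mod_cast hN
    calc ((2 * ℓ : ℕ) : ℤ) ≤ ((∑ x ∈ S, ∑ y ∈ Sᶜ, cap H s t x y : ℕ) : ℤ) := this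
      _ = ∑ x ∈ S, ∑ y ∈ Sᶜ, (cap H s t x y : ℤ) := by push_cast; rfl
  set C : Finset V := Finset.univ.filter
    (fun v => v ≠ s ∧ v ≠ t ∧ Sum.inl v ∈ S ∧ Sum.inr v ∉ S) with hC
  have hCs : s ∉ C := by simp [hC]
  have hCt : t ∉ C := by simp [hC]
  have hprod : (∑ x ∈ S, ∑ y ∈ Sᶜ, cap H s t x y)
      = ∑ p ∈ S ×ˢ Sᶜ, cap H s t p.1 p.2 := by
    rw [Finset.sum_product]
  set F1 : Finset ((V ⊕ V) × (V ⊕ V)) := C.image (fun v => (Sum.inl v, Sum.inr v)) with hF1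
  have hF1sub : F1 ⊆ S ×ˢ Sᶜ := by
    intro p hp
    rw [hF1, Finset.mem_image] at hp
    obtain ⟨v, hv, rfl⟩ := hp
    rw [hC, Finset.mem_filter] at hv
    rw [Finset.mem_product, Finset.mem_compl]
    exact ⟨hv.2.2.2.1, hv.2.2.2.2⟩
  have hF1inj : Set.InjOn (fun v => ((Sum.inl v, Sum.inr v) : (V ⊕ V) × (V ⊕ V))) C := by
    intro x _ y _ h
    exact Sum.inl.inj (congrArg Prod.fst h)
  have hF1sum : (∑ p ∈ F1, cap H s t p.1 p.2) = 2 * C.card := by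
    rw [hF1, Finset.sum_image hF1inj]
    rw [Finset.sum_congr rfl fun v hv => ?_]
    · rw [Finset.sum_const, smul_eq_mul, mul_comm]
    · rw [hC, Finset.mem_filter] at hv
      show cap H s t (Sum.inl v) (Sum.inr v) = 2
      rw [cap_lr, if_pos ⟨rfl, hv.2.1, hv.2.2.1⟩]
  by_cases hCcard : ℓ ≤ C.card
  · calc 2 * ℓ ≤ 2 * C.card := by omega
      _ = ∑ p ∈ F1, cap H s t p.1 p.2 := hF1sum.symm
      _ ≤ ∑ p ∈ S ×ˢ Sᶜ, cap H s t p.1 p.2 :=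
        Finset.sum_le_sum_of_subset_of_nonneg hF1sub fun _ _ _ => Nat.zero_le _
      _ = _ := hprod.symm
  · push_neg at hCcard
    set G : SimpleGraph V := SimpleGraph.fromRel
      (fun a b => H.Adj a b ∧ a ∉ C ∧ b ∉ C) with hG
    set m : ℕ := 2 * (ℓ - C.card) with hm
    obtain ⟨f', hdisj⟩ := hyp C hCs hCt hCcard
    set q : Fin m → G.Walk s t := fun k => (f' k).bypass with hq
    have hqdisj : ∀ i j, i ≠ j → ∀ e, e ∈ (q i).edges → e ∉ (q j).edges := by
      intro i j hij e hei hej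
      exact hdisj i j hij e ((f' i).edges_bypass_subset hei) ((f' j).edges_bypass_subset hej)
    have hAdjS : ∀ u x : V, G.Adj u x → x ≠ s → Sum.inl x ∈ S → Sum.inr x ∈ S := by
      intro u x hadj hxs hxin
      have hxC : x ∉ C := by
        rw [hG, SimpleGraph.fromRel_adj] at hadj
        rcases hadj.2 with ⟨_, _, h⟩ | ⟨_, h, _⟩ <;> exact h
      by_cases hxt : x = t
      · exact absurd (hxt ▸ hxin) hsnkS
      · by_contra hxr
        rw [hC, Finset.mem_filter] at hxC
        exact hxC ⟨Finset.mem_univ x, hxs, hxt, hxin, hxr⟩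
    have hcross : ∀ k : Fin m, ∃ x y : V,
        s(x, y) ∈ (q k).edges ∧ Sum.inr x ∈ S ∧ Sum.inl y ∉ S := by
      intro k
      exact cross s S hsrcS hAdjS s t (q k) hsrcS hsnkS hst
    choose px py hpe hpx hpy using hcross
    set F2 : Finset ((V ⊕ V) × (V ⊕ V)) :=
      Finset.univ.image (fun k => ((Sum.inr (px k), Sum.inl (py k)) :
        (V ⊕ V) × (V ⊕ V))) with hF2
    have hinj : Function.Injective
        (fun k => ((Sum.inr (px k), Sum.inl (py k)) : (V ⊕ V) × (V ⊕ V))) := by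
      intro i j h
      by_contra hij
      have hx : px i = px j := Sum.inr.inj (congrArg Prod.fst h)
      have hy : py i = py j := Sum.inl.inj (congrArg Prod.snd h)
      exact hqdisj i j hij _ (hpe i) (by rw [hx, hy]; exact hpe j)
    have hF2card : F2.card = m := by
      rw [hF2, Finset.card_image_of_injective _ hinj, Finset.card_univ, Fintype.card_fin]
    have hF2sub : F2 ⊆ S ×ˢ Sᶜ := by
      intro p hp
      rw [hF2, Finset.mem_image] at hp
      obtain ⟨k, _, rfl⟩ := hp
      rw [Finset.mem_product, Finset.mem_compl]
      exact ⟨hpx k, hpy k⟩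
    have hF2sum : (∑ p ∈ F2, cap H s t p.1 p.2) = m := by
      rw [hF2, Finset.sum_image (hinj.injOn)]
      rw [Finset.sum_congr rfl fun k _ => ?_]
      · rw [Finset.sum_const, smul_eq_mul, mul_one, Finset.card_univ, Fintype.card_fin]
      · show cap H s t (Sum.inr (px k)) (Sum.inl (py k)) = 1
        have hadj : G.Adj (px k) (py k) := (q k).adj_of_mem_edges (hpe k)
        have : H.Adj (px k) (py k) := by
          rw [hG, SimpleGraph.fromRel_adj] at hadj
          rcases hadj.2 with ⟨h, _, _⟩ | ⟨h, _, _⟩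
          · exact h
          · exact h.symm
        rw [cap_rl, if_pos this]
    have hdisjF : Disjoint F1 F2 := by
      rw [Finset.disjoint_left]
      intro p hp1 hp2
      rw [hF1, Finset.mem_image] at hp1
      rw [hF2, Finset.mem_image] at hp2
      obtain ⟨v, _, rfl⟩ := hp1
      obtain ⟨k, _, hk⟩ := hp2
      exact absurd (congrArg Prod.fst hk) (by simp)
    calc 2 * ℓ = 2 * C.card + m := by rw [hm]; omega
      _ = (∑ p ∈ F1, cap H s t p.1 p.2) + ∑ p ∈ F2, cap H s t p.1 p.2 := by
        rw [hF1sum, hF2sum]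
      _ = ∑ p ∈ F1 ∪ F2, cap H s t p.1 p.2 := (Finset.sum_union hdisjF).symm
      _ ≤ ∑ p ∈ S ×ˢ Sᶜ, cap H s t p.1 p.2 :=
        Finset.sum_le_sum_of_subset_of_nonneg
          (Finset.union_subset hF1sub hF2sub) fun _ _ _ => Nat.zero_le _
      _ = _ := hprod.symm

end network2


/-- `λ_{H∖C}(s,t) ≥ 2(ℓ − |C|)` holds for every `C ⊆ V ∖ {s,t}` with
`|C| < ℓ` iff `H` contains `2ℓ` pairwise edge-disjoint `s`–`t` paths such that every
vertex `v ∈ V ∖ {s,t}` belongs to at most `2` of them. -/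
theorem ekm_condition_iff_capacitated_flow
    {V : Type*} [Fintype V] [DecidableEq V]
    (H : SimpleGraph V) (s t : V) (hst : s ≠ t) (ℓ : ℕ) (hℓ : 1 ≤ ℓ) :
    (∀ C : Finset V, s ∉ C → t ∉ C → C.card < ℓ →
        HasFlow (SimpleGraph.fromRel fun a b => H.Adj a b ∧ a ∉ C ∧ b ∉ C) s t
          (2 * (ℓ - C.card))) ↔
      ∃ f : Fin (2 * ℓ) → H.Walk s t, (∀ i, (f i).IsPath) ∧
        (∀ i j, i ≠ j → ∀ e, e ∈ (f i).edges → e ∉ (f j).edges) ∧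
        (∀ v : V, v ≠ s → v ≠ t → {i : Fin (2 * ℓ) | v ∈ (f i).support}.ncard ≤ 2) := by
  classical
  constructor
  · -- forward direction
    intro hyp
    have hcut : ∀ S : Finset (V ⊕ V), Sum.inr s ∈ S → Sum.inl t ∉ S →
        ((2 * ℓ : ℕ) : ℤ) ≤ ∑ x ∈ S, ∑ y ∈ Sᶜ, (cap H s t x y : ℤ) :=
      fun S hs ht => cut_bound H s t hst ℓ hℓ hyp S hs ht
    obtain ⟨g, hg, hval, hnorm⟩ := exists_norm_flow H s t hst (2 * ℓ) hcut
    obtain ⟨P, hP⟩ := decomp (cap H s t) (Sum.inr s) (Sum.inl t)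
      (by simp) (cap_src H s t) (2 * ℓ) g hg hval
    have single_le : ∀ (i : Fin (2 * ℓ)) (x y : V ⊕ V),
        φP (Sum.inr s) (Sum.inl t) (P i) x y ≤ g x y := by
      intro i x y
      refine le_trans ?_ (hP x y)
      exact Finset.single_le_sum
        (f := fun j => φP (Sum.inr s) (Sum.inl t) (P j) x y)
        (fun _ _ => Nat.zero_le _) (Finset.mem_univ i)
    have hpos : ∀ i, ∀ p ∈ pairsL (P i).L, 0 < g p.1 p.2 := by
      intro i p hp
      have h1 : 0 < φP (Sum.inr s) (Sum.inl t) (P i) p.1 p.2 :=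
        (φP_pos_iff (Sum.inr s) (Sum.inl t) (P i) p.1 p.2).mpr (by rwa [Prod.mk.eta])
      exact lt_of_lt_of_le h1 (single_le i p.1 p.2)
    choose w hwp hwe hws using fun i => npath_to_walk H s t hst hg (P i) (hpos i)
    have mem_pairs_count : ∀ (i : Fin (2 * ℓ)) (x y : V ⊕ V),
        (x, y) ∈ pairsL (P i).L → 1 ≤ φP (Sum.inr s) (Sum.inl t) (P i) x y := by
      intro i x y h
      exact (φP_pos_iff (Sum.inr s) (Sum.inl t) (P i) x y).mpr h
    refine ⟨w, hwp, ?_, ?_⟩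
    · intro i j hij e hei hej
      induction e using Sym2.ind with
      | _ x y =>
        have pairsum : ∀ x' y' : V ⊕ V,
            φP (Sum.inr s) (Sum.inl t) (P i) x' y' +
              φP (Sum.inr s) (Sum.inl t) (P j) x' y' ≤ g x' y' := by
          intro x' y'
          have hsub : (∑ k ∈ ({i, j} : Finset (Fin (2 * ℓ))),
              φP (Sum.inr s) (Sum.inl t) (P k) x' y') ≤
              ∑ k, φP (Sum.inr s) (Sum.inl t) (P k) x' y' :=
            Finset.sum_le_sum_of_subset (Finset.subset_univ _)
          rw [Finset.sum_pair hij] at hsub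
          exact le_trans hsub (hP x' y')
        have hcap1 : g (Sum.inr x) (Sum.inl y) ≤ 1 := by
          refine le_trans (hg.1 _ _) ?_
          rw [cap_rl]
          split <;> omega
        have hcap2 : g (Sum.inr y) (Sum.inl x) ≤ 1 := by
          refine le_trans (hg.1 _ _) ?_
          rw [cap_rl]
          split <;> omega
        have hnormxy := hnorm x y
        have hi := hwe i x y hei
        have hj := hwe j x y hej
        rcases hi with hi | hi <;> rcases hj with hj | hj
        · have h1 := mem_pairs_count i _ _ hi
          have h2 := mem_pairs_count j _ _ hj
          have := pairsum (Sum.inr x) (Sum.inl y)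
          omega
        · have h1 := mem_pairs_count i _ _ hi
          have h2 := mem_pairs_count j _ _ hj
          have hg1 := single_le i (Sum.inr x) (Sum.inl y)
          have hg2 := single_le j (Sum.inr y) (Sum.inl x)
          rcases hnormxy with h | h <;> omega
        · have h1 := mem_pairs_count i _ _ hi
          have h2 := mem_pairs_count j _ _ hj
          have hg1 := single_le i (Sum.inr y) (Sum.inl x)
          have hg2 := single_le j (Sum.inr x) (Sum.inl y)
          rcases hnormxy with h | h <;> omega
        · have h1 := mem_pairs_count i _ _ hi
          have h2 := mem_pairs_count j _ _ hj
          have := pairsum (Sum.inr y) (Sum.inl x)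
          omega
    · intro v hvs hvt
      set A : Finset (Fin (2 * ℓ)) := Finset.univ.filter (fun i => v ∈ (w i).support)
        with hA
      have hset : {i : Fin (2 * ℓ) | v ∈ (w i).support} = ↑A := by
        ext i
        simp [hA]
      rw [hset, Set.ncard_coe_finset]
      have hcard : A.card = ∑ i ∈ A, 1 := by simp
      have hle1 : ∀ i ∈ A, 1 ≤ φP (Sum.inr s) (Sum.inl t) (P i) (Sum.inl v) (Sum.inr v) := by
        intro i hi
        rw [hA, Finset.mem_filter] at hi
        exact mem_pairs_count i _ _ (hws i v hi.2 hvs hvt)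
      have hsumA : (∑ i ∈ A, 1) ≤
          ∑ i ∈ A, φP (Sum.inr s) (Sum.inl t) (P i) (Sum.inl v) (Sum.inr v) :=
        Finset.sum_le_sum hle1
      have hsumU : (∑ i ∈ A, φP (Sum.inr s) (Sum.inl t) (P i) (Sum.inl v) (Sum.inr v)) ≤
          ∑ i, φP (Sum.inr s) (Sum.inl t) (P i) (Sum.inl v) (Sum.inr v) :=
        Finset.sum_le_sum_of_subset (Finset.subset_univ _)
      have hgv := hP (Sum.inl v) (Sum.inr v)
      have hcapv : g (Sum.inl v) (Sum.inr v) ≤ 2 := by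
        refine le_trans (hg.1 _ _) ?_
        rw [cap_lr]
        split <;> omega
      omega
  · -- backward direction
    rintro ⟨f, hpath, hdisj, hcnt⟩ C hCs hCt hCcard
    have hA2 : ∀ v : V, v ≠ s → v ≠ t →
        (Finset.univ.filter (fun i => v ∈ (f i).support)).card ≤ 2 := by
      intro v h1 h2
      have h := hcnt v h1 h2
      rwa [show {i : Fin (2 * ℓ) | v ∈ (f i).support}
          = ↑(Finset.univ.filter (fun i => v ∈ (f i).support)) by ext i; simp,
        Set.ncard_coe_finset] at h
    set bad : Finset (Fin (2 * ℓ)) :=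
      C.biUnion (fun v => Finset.univ.filter (fun i => v ∈ (f i).support)) with hbad
    have hbadcard : bad.card ≤ 2 * C.card := by
      refine le_trans (Finset.card_biUnion_le) ?_
      calc (∑ v ∈ C, (Finset.univ.filter (fun i => v ∈ (f i).support)).card)
          ≤ ∑ _v ∈ C, 2 := Finset.sum_le_sum fun v hv =>
            hA2 v (fun h => hCs (h ▸ hv)) (fun h => hCt (h ▸ hv))
        _ = 2 * C.card := by rw [Finset.sum_const, smul_eq_mul, mul_comm]
    set good : Finset (Fin (2 * ℓ)) := Finset.univ \ bad with hgood
    have hgoodcard : 2 * (ℓ - C.card) ≤ good.card := by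
      rw [hgood, Finset.card_sdiff_of_subset (Finset.subset_univ bad), Finset.card_univ,
        Fintype.card_fin]
      omega
    obtain ⟨good', hsub, hcard⟩ := Finset.exists_subset_card_eq hgoodcard
    set e := good'.equivFinOfCardEq hcard with he
    have hgoodmem : ∀ i ∈ good, ∀ v ∈ C, v ∉ (f i).support := by
      intro i hi v hv hmem
      rw [hgood, Finset.mem_sdiff] at hi
      exact hi.2 (Finset.mem_biUnion.mpr ⟨v, hv, Finset.mem_filter.mpr
        ⟨Finset.mem_univ i, hmem⟩⟩)
    have hedges : ∀ i ∈ good, ∀ e' ∈ (f i).edges,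
        e' ∈ (SimpleGraph.fromRel fun a b => H.Adj a b ∧ a ∉ C ∧ b ∉ C).edgeSet := by
      intro i hi e' he'
      induction e' using Sym2.ind with
      | _ x y =>
        have hadj : H.Adj x y := (f i).adj_of_mem_edges he'
        have hx : x ∈ (f i).support := (f i).fst_mem_support_of_mem_edges he'
        have hy : y ∈ (f i).support := (f i).snd_mem_support_of_mem_edges he'
        rw [SimpleGraph.mem_edgeSet, SimpleGraph.fromRel_adj]
        refine ⟨hadj.ne, Or.inl ⟨hadj, ?_, ?_⟩⟩
        · intro hxC; exact hgoodmem i hi x hxC hx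
        · intro hyC; exact hgoodmem i hi y hyC hy
    refine ⟨fun k => ((f (e.symm k).1).transfer _
      (hedges (e.symm k).1 (hsub (e.symm k).2))), ?_⟩
    intro k1 k2 hk e' he1 he2
    rw [SimpleGraph.Walk.edges_transfer] at he1 he2
    have hne : ((e.symm k1).1 : Fin (2 * ℓ)) ≠ (e.symm k2).1 := by
      intro h
      exact hk (by
        have := Subtype.ext (p := fun x => x ∈ good') h
        calc k1 = e (e.symm k1) := (e.apply_symm_apply k1).symm
          _ = e (e.symm k2) := by rw [this]
          _ = k2 := e.apply_symm_apply k2)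
    exact hdisj _ _ hne e' he1 he2
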